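/- arXiv:2002.10273 — 3 statements merged into one kernel-verified Lean document; each statement's English description precedes it below -/
import Mathlib

section
/- Let 2 < p < 4, 0 < ε < p−2, θ > 2, K > 0, and let a satisfy max{0, (p−θ)/(p−2)} < a < 1. Define F(t) = |t|^p + a(p−2)|t|^{p−ε} sin²(|t|^ε/ε) with derivative f = F′, and set t_n = (ε(nπ + 3π/4))^{1/ε}. Then for every n, f(t_n)·t_n − θ·F(t_n) − K·t_n² = |t_n|^p[(p−θ) − a(p−2) + a(p−2)(p−θ−ε)/(2|t_n|^ε)] − K·t_n², and this quantity tends to −∞ as n → ∞. In particular F fails the condition: there exist θ > 2 and K > 0 such that f(t)t − θF(t) + Kt² ≥ 0 for all t ∈ ℝ. -/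
open Filter Real

/-- For `2 < p < 4`, `0 < ε < p - 2`, `θ > 2`, `K > 0` and
`max{0, (p-θ)/(p-2)} < a < 1`, with `F` the model nonlinearity, `f = F'` and
`t_n = (ε(nπ + 3π/4))^{1/ε}`, one has for every `n`
`f(t_n)t_n - θF(t_n) - K t_n² = |t_n|^p[(p-θ) - a(p-2) + a(p-2)(p-θ-ε)/(2|t_n|^ε)] - K t_n²`,
which tends to `-∞`; in particular the (WAR)-type inequality
`f(t)t - θF(t) + Kt² ≥ 0` for all `t` fails for these `θ`, `K`. -/
theorem stmt_2 (p ε θ K a : ℝ) (hp2 : 2 < p) (hp4 : p < 4) (hε : 0 < ε) (hεp : ε < p - 2)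
    (hθ : 2 < θ) (hK : 0 < K)
    (ha1 : max 0 ((p - θ) / (p - 2)) < a) (ha2 : a < 1)
    (F f : ℝ → ℝ)
    (hF : ∀ t : ℝ, F t = |t| ^ p + a * (p - 2) * |t| ^ (p - ε) * Real.sin (|t| ^ ε / ε) ^ 2)
    (hf : f = deriv F)
    (t : ℕ → ℝ)
    (ht : ∀ n : ℕ, t n = (ε * (n * Real.pi + 3 * Real.pi / 4)) ^ (1 / ε)) :
    (∀ n : ℕ, f (t n) * t n - θ * F (t n) - K * (t n) ^ 2 =
        |t n| ^ p * ((p - θ) - a * (p - 2) + a * (p - 2) * (p - θ - ε) / (2 * |t n| ^ ε))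
          - K * (t n) ^ 2) ∧
      Filter.Tendsto (fun n : ℕ => f (t n) * t n - θ * F (t n) - K * (t n) ^ 2)
        Filter.atTop Filter.atBot ∧
      ¬ (∀ s : ℝ, 0 ≤ f s * s - θ * F s + K * s ^ 2) := by
  have hπ := Real.pi_pos
  have hεne : ε ≠ 0 := hε.ne'
  set C : ℝ := a * (p - 2) with hCdef
  -- positivity of the base
  have hXpos : ∀ n : ℕ, 0 < ε * (n * Real.pi + 3 * Real.pi / 4) := by
    intro n
    have hn : (0:ℝ) ≤ (n:ℝ) := Nat.cast_nonneg n
    have : (0:ℝ) ≤ (n:ℝ) * Real.pi := mul_nonneg hn hπ.le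
    nlinarith
  have htpos : ∀ n : ℕ, 0 < t n := by
    intro n; rw [ht n]; exact Real.rpow_pos_of_pos (hXpos n) _
  have htε : ∀ n : ℕ, (t n) ^ ε = ε * (n * Real.pi + 3 * Real.pi / 4) := by
    intro n
    rw [ht n, ← Real.rpow_mul (hXpos n).le, one_div_mul_cancel hεne, Real.rpow_one]
  have harg : ∀ n : ℕ, (t n) ^ ε / ε = 3 * Real.pi / 4 + n * Real.pi := by
    intro n; rw [htε n]; field_simp; ring
  have hs34 : Real.sin (3 * Real.pi / 4) = Real.sqrt 2 / 2 := by
    rw [show (3 * Real.pi / 4 : ℝ) = Real.pi - Real.pi / 4 by ring, Real.sin_pi_sub,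
      Real.sin_pi_div_four]
  have hc34 : Real.cos (3 * Real.pi / 4) = -(Real.sqrt 2 / 2) := by
    rw [show (3 * Real.pi / 4 : ℝ) = Real.pi - Real.pi / 4 by ring, Real.cos_pi_sub,
      Real.cos_pi_div_four]
  have hone : ∀ n : ℕ, ((-1 : ℝ) ^ n) * ((-1 : ℝ) ^ n) = 1 := by
    intro n; rw [← pow_add, ← two_mul, pow_mul]; norm_num
  have hsq2 : Real.sqrt 2 * Real.sqrt 2 = 2 := Real.mul_self_sqrt (by norm_num)
  have hsinsq : ∀ n : ℕ, Real.sin ((t n) ^ ε / ε) ^ 2 = 1/2 := by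
    intro n
    rw [harg n, Real.sin_add_nat_mul_pi, hs34]
    have := hone n
    nlinarith [hone n, hsq2]
  have hsincos : ∀ n : ℕ,
      Real.sin ((t n) ^ ε / ε) * Real.cos ((t n) ^ ε / ε) = -(1/2) := by
    intro n
    rw [harg n, Real.sin_add_nat_mul_pi, Real.cos_add_nat_mul_pi, hs34, hc34]
    have h1 := hone n
    nlinarith [hone n, hsq2]
  -- value of the derivative at positive points
  have hfval : ∀ x : ℝ, 0 < x → f x =
      p * x ^ (p - 1) + C * ((p - ε) * x ^ (p - ε - 1) * Real.sin (x ^ ε / ε) ^ 2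
        + x ^ (p - ε) * (2 * Real.sin (x ^ ε / ε) * (Real.cos (x ^ ε / ε) * x ^ (ε - 1)))) := by
    intro x hx
    have h1 : HasDerivAt (fun y : ℝ => y ^ p) (p * x ^ (p - 1)) x :=
      Real.hasDerivAt_rpow_const (Or.inl hx.ne')
    have h2 : HasDerivAt (fun y : ℝ => y ^ (p - ε)) ((p - ε) * x ^ (p - ε - 1)) x :=
      Real.hasDerivAt_rpow_const (Or.inl hx.ne')
    have h3 : HasDerivAt (fun y : ℝ => y ^ ε / ε) (ε * x ^ (ε - 1) / ε) x :=
      (Real.hasDerivAt_rpow_const (Or.inl hx.ne')).div_const ε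
    have h4 : HasDerivAt (fun y : ℝ => Real.sin (y ^ ε / ε))
        (Real.cos (x ^ ε / ε) * (ε * x ^ (ε - 1) / ε)) x :=
      (Real.hasDerivAt_sin _).comp x h3
    have h5 := h4.pow 2
    have h6 := h1.add ((h2.mul h5).const_mul C)
    have h7 : HasDerivAt F
        (p * x ^ (p - 1) + C * ((p - ε) * x ^ (p - ε - 1) * Real.sin (x ^ ε / ε) ^ 2
          + x ^ (p - ε) * ((2 : ℕ) * Real.sin (x ^ ε / ε) ^ (2 - 1) *
            (Real.cos (x ^ ε / ε) * (ε * x ^ (ε - 1) / ε))))) x := by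
      refine HasDerivAt.congr_of_eventuallyEq h6 ?_
      filter_upwards [eventually_gt_nhds hx] with y hy
      rw [hF y, abs_of_pos hy]
      simp only [Pi.add_apply, Pi.mul_apply, Pi.pow_apply]
      ring
    rw [hf, h7.deriv]
    field_simp
    norm_num
    ring
  -- normalized form of the key quantity
  have hLHS : ∀ n : ℕ, f (t n) * t n - θ * F (t n) =
      (p - θ - C) * (t n) ^ p + (C * (p - θ - ε) / 2) * (t n) ^ (p - ε) := by
    intro n
    have hx := htpos n
    have e1 : (t n) ^ (p - 1) * t n = (t n) ^ p := by
      rw [← Real.rpow_add_one hx.ne', sub_add_cancel]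
    have e2 : (t n) ^ (p - ε - 1) * t n = (t n) ^ (p - ε) := by
      rw [← Real.rpow_add_one hx.ne', sub_add_cancel]
    have e3 : (t n) ^ (p - ε) * ((t n) ^ (ε - 1) * t n) = (t n) ^ p := by
      rw [← Real.rpow_add_one hx.ne', sub_add_cancel, ← Real.rpow_add hx]
      ring_nf
    rw [hfval (t n) hx, hF (t n), abs_of_pos hx]
    linear_combination p * e1 + (C * (p - ε) * Real.sin ((t n) ^ ε / ε) ^ 2) * e2
      + (2 * C * Real.sin ((t n) ^ ε / ε) * Real.cos ((t n) ^ ε / ε)) * e3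
      + (C * (p - ε - θ) * (t n) ^ (p - ε)) * hsinsq n
      + (2 * C * (t n) ^ p) * hsincos n
  have hRHS : ∀ n : ℕ,
      |t n| ^ p * ((p - θ) - C + C * (p - θ - ε) / (2 * |t n| ^ ε)) - K * (t n) ^ 2 =
      (p - θ - C) * (t n) ^ p + (C * (p - θ - ε) / 2) * (t n) ^ (p - ε) - K * (t n) ^ 2 := by
    intro n
    have hx := htpos n
    have e4 : (t n) ^ (p - ε) * (t n) ^ ε = (t n) ^ p := by
      rw [← Real.rpow_add hx]; ring_nf
    have hxε : (0:ℝ) < (t n) ^ ε := Real.rpow_pos_of_pos hx ε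
    rw [abs_of_pos hx]
    field_simp
    linear_combination (-a * (p - 2) * (p - θ - ε)) * e4
  -- part 1
  have part1 : ∀ n : ℕ, f (t n) * t n - θ * F (t n) - K * (t n) ^ 2 =
      |t n| ^ p * ((p - θ) - C + C * (p - θ - ε) / (2 * |t n| ^ ε)) - K * (t n) ^ 2 := by
    intro n
    rw [hLHS n, hRHS n]
  -- factored form
  have hform2 : ∀ (e : ℝ) (n : ℕ),
      (p - θ - C) * (t n) ^ p + (C * (p - θ - ε) / 2) * (t n) ^ (p - ε) + e * (t n) ^ 2 =
      (t n) ^ p * ((p - θ - C) + (C * (p - θ - ε) / 2) * (t n) ^ (-ε)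
        + e * (t n) ^ (2 - p)) := by
    intro e n
    have hx := htpos n
    have m1 : (t n) ^ p * (t n) ^ (-ε) = (t n) ^ (p - ε) := by
      rw [← Real.rpow_add hx]; ring_nf
    have m2 : (t n) ^ p * (t n) ^ (2 - p) = (t n) ^ (2:ℕ) := by
      rw [← Real.rpow_add hx, ← Real.rpow_natCast (t n) 2]
      norm_num
    push_cast at m2
    linear_combination (-(C * (p - θ - ε) / 2)) * m1 - e * m2
  -- tendsto atTop of t
  have hTT : Tendsto t atTop atTop := by
    have h1 : Tendsto (fun n : ℕ => ε * ((n:ℝ) * Real.pi + 3 * Real.pi / 4)) atTop atTop := by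
      apply Tendsto.const_mul_atTop hε
      apply tendsto_atTop_add_const_right
      exact tendsto_natCast_atTop_atTop.atTop_mul_const hπ
    have h2 := (tendsto_rpow_atTop (y := 1/ε) (by positivity)).comp h1
    exact h2.congr fun n => (ht n).symm
  have hP : Tendsto (fun n : ℕ => (t n) ^ p) atTop atTop :=
    (tendsto_rpow_atTop (by linarith : (0:ℝ) < p)).comp hTT
  have hE : Tendsto (fun n : ℕ => (t n) ^ (-ε)) atTop (nhds 0) :=
    (tendsto_rpow_neg_atTop hε).comp hTT
  have h2p : Tendsto (fun n : ℕ => (t n) ^ (2 - p)) atTop (nhds 0) := by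
    have h := (tendsto_rpow_neg_atTop (by linarith : (0:ℝ) < p - 2)).comp hTT
    exact h.congr fun n => by simp only [Function.comp_apply, show -(p - 2) = 2 - p from by ring]
  have hneg : p - θ - C < 0 := by
    have h1 : (p - θ) / (p - 2) < a := lt_of_le_of_lt (le_max_right _ _) ha1
    have h2 : (0:ℝ) < p - 2 := by linarith
    have h3 : p - θ < a * (p - 2) := by
      have := (div_lt_iff₀ h2).mp h1
      linarith
    simp only [hCdef]; linarith
  have hbr : ∀ e : ℝ, Tendsto (fun n : ℕ => (p - θ - C) + (C * (p - θ - ε) / 2) * (t n) ^ (-ε)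
      + e * (t n) ^ (2 - p)) atTop (nhds (p - θ - C)) := by
    intro e
    have h1 : Tendsto (fun n : ℕ => (p - θ - C) + (C * (p - θ - ε) / 2) * t n ^ (-ε)
        + e * t n ^ (2 - p)) atTop
        (nhds ((p - θ - C) + (C * (p - θ - ε) / 2) * 0 + e * 0)) :=
      (tendsto_const_nhds.add (hE.const_mul _)).add (h2p.const_mul e)
    simpa using h1
  have key : ∀ e : ℝ, Tendsto (fun n : ℕ => (p - θ - C) * (t n) ^ p
      + (C * (p - θ - ε) / 2) * (t n) ^ (p - ε) + e * (t n) ^ 2) atTop atBot := by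
    intro e
    have h := hP.atTop_mul_neg hneg (hbr e)
    exact h.congr fun n => (hform2 e n).symm
  refine ⟨part1, ?_, ?_⟩
  · have h := key (-K)
    refine h.congr fun n => ?_
    have := hLHS n
    linarith
  · intro hall
    have h := key K
    have h3 : Tendsto (fun n : ℕ => f (t n) * t n - θ * F (t n) + K * (t n) ^ 2)
        atTop atBot := h.congr fun n => by have := hLHS n; linarith
    obtain ⟨n, hn⟩ := (h3.eventually (Filter.eventually_lt_atBot (0:ℝ))).exists
    have := hall (t n)
    linarith
end

section
/- Let 2 < p < 4, 0 < ε < p−2, and 0 < a < 1. Define F(t) = |t|^p + a(p−2)|t|^{p−ε} sin²(|t|^ε/ε) with derivative f = F′. Then for all t ≠ 0, f(t)·t − 2F(t) = (p−2)|t|^p(1 + a sin(2|t|^ε/ε)) + a(p−2)(p−2−ε)|t|^{p−ε} sin²(|t|^ε/ε), and consequently f(t)·t − 2F(t) ≥ (1−a)(p−2)|t|^p for all t ∈ ℝ. -/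
/-- For `2 < p < 4`, `0 < ε < p - 2`, `0 < a < 1`, with `F` the model
nonlinearity and `f = F'`: for `t ≠ 0`,
`f(t)t - 2F(t) = (p-2)|t|^p(1 + a sin(2|t|^ε/ε)) + a(p-2)(p-2-ε)|t|^{p-ε} sin²(|t|^ε/ε)`,
and consequently `f(t)t - 2F(t) ≥ (1-a)(p-2)|t|^p` for all `t`. -/
theorem stmt_3 (p ε a : ℝ) (hp2 : 2 < p) (hp4 : p < 4) (hε : 0 < ε) (hεp : ε < p - 2)
    (ha0 : 0 < a) (ha1 : a < 1)
    (F f : ℝ → ℝ)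
    (hF : ∀ t : ℝ, F t = |t| ^ p + a * (p - 2) * |t| ^ (p - ε) * Real.sin (|t| ^ ε / ε) ^ 2)
    (hf : f = deriv F) :
    (∀ t : ℝ, t ≠ 0 → f t * t - 2 * F t =
        (p - 2) * |t| ^ p * (1 + a * Real.sin (2 * (|t| ^ ε / ε)))
          + a * (p - 2) * (p - 2 - ε) * |t| ^ (p - ε) * Real.sin (|t| ^ ε / ε) ^ 2) ∧
      ∀ t : ℝ, (1 - a) * (p - 2) * |t| ^ p ≤ f t * t - 2 * F t := by
  have key : ∀ t : ℝ, t ≠ 0 → f t * t - 2 * F t =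
        (p - 2) * |t| ^ p * (1 + a * Real.sin (2 * (|t| ^ ε / ε)))
          + a * (p - 2) * (p - 2 - ε) * |t| ^ (p - ε) * Real.sin (|t| ^ ε / ε) ^ 2 := by
    intro t ht
    have habs : (0 : ℝ) < |t| := abs_pos.mpr ht
    -- derivative of abs at t ≠ 0
    obtain ⟨s, hs, hst⟩ : ∃ s : ℝ, HasDerivAt (fun x : ℝ => |x|) s t ∧ s * t = |t| := by
      rcases ht.lt_or_gt with h | h
      · refine ⟨-1, ?_, by rw [abs_of_neg h]; ring⟩
        have : (fun x : ℝ => |x|) =ᶠ[nhds t] fun x => -x :=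
          Filter.eventually_of_mem (Iio_mem_nhds h) fun x hx => abs_of_neg hx
        exact HasDerivAt.congr_of_eventuallyEq ((hasDerivAt_id t).neg) this
      · refine ⟨1, ?_, by rw [abs_of_pos h]; ring⟩
        have : (fun x : ℝ => |x|) =ᶠ[nhds t] fun x => x :=
          Filter.eventually_of_mem (Ioi_mem_nhds h) fun x hx => abs_of_pos hx
        exact HasDerivAt.congr_of_eventuallyEq (hasDerivAt_id t) this
    have hq : ∀ q : ℝ, HasDerivAt (fun x : ℝ => |x| ^ q) (q * |t| ^ (q - 1) * s) t := by
      intro q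
      exact (Real.hasDerivAt_rpow_const (p := q) (Or.inl habs.ne')).comp t hs
    set θ : ℝ := |t| ^ ε / ε with hθ
    have hsin : HasDerivAt (fun x : ℝ => Real.sin (|x| ^ ε / ε))
        (Real.cos θ * (ε * |t| ^ (ε - 1) * s / ε)) t :=
      by have := (Real.hasDerivAt_sin θ).comp t ((hq ε).div_const ε); exact this
    have hD : HasDerivAt F
        (p * |t| ^ (p - 1) * s + (a * (p - 2)) *
          ((p - ε) * |t| ^ (p - ε - 1) * s * Real.sin θ ^ 2 +
            |t| ^ (p - ε) * (2 * Real.sin θ ^ 1 * (Real.cos θ * (ε * |t| ^ (ε - 1) * s / ε))))) t := by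
      have h2 : HasDerivAt (fun x : ℝ => |x| ^ (p - ε) * Real.sin (|x| ^ ε / ε) ^ 2)
          ((p - ε) * |t| ^ (p - ε - 1) * s * Real.sin θ ^ 2 +
            |t| ^ (p - ε) * (2 * Real.sin θ ^ 1 * (Real.cos θ * (ε * |t| ^ (ε - 1) * s / ε)))) t :=
        (hq (p - ε)).mul (hsin.pow 2)
      have := (hq p).add (h2.const_mul (a * (p - 2)))
      refine this.congr_of_eventuallyEq (Filter.Eventually.of_forall fun x => ?_) |>.congr_deriv ?_
      · rw [hF x]; simp only [Pi.add_apply]; ring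
      · ring
    rw [hf, hD.deriv, hF t]
    have e1 : |t| ^ (p - 1) * (s * t) = |t| ^ p := by
      rw [hst, ← Real.rpow_add_one habs.ne']; ring_nf
    have e2 : |t| ^ (p - ε - 1) * (s * t) = |t| ^ (p - ε) := by
      rw [hst, ← Real.rpow_add_one habs.ne']; ring_nf
    have e3 : |t| ^ (p - ε) * (|t| ^ (ε - 1) * (s * t)) = |t| ^ p := by
      rw [hst, ← Real.rpow_add_one habs.ne', ← Real.rpow_add habs]; ring_nf
    rw [Real.sin_two_mul]
    rw [show ε * |t| ^ (ε - 1) * s / ε = |t| ^ (ε - 1) * s by field_simp]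
    linear_combination p * e1 + (a * (p - 2) * (p - ε) * Real.sin θ ^ 2) * e2 +
      (2 * a * (p - 2) * Real.sin θ * Real.cos θ) * e3
  refine ⟨key, fun t => ?_⟩
  rcases eq_or_ne t 0 with rfl | ht
  · have h0 : F 0 = 0 := by
      rw [hF]; simp [Real.zero_rpow (by positivity : p ≠ 0),
        Real.zero_rpow (by nlinarith : p - ε ≠ 0)]
    rw [h0]
    simp [Real.zero_rpow (by positivity : p ≠ 0)]
  · rw [key t ht]
    have h1 : -1 ≤ Real.sin (2 * (|t| ^ ε / ε)) := Real.neg_one_le_sin _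
    have h2 : (0:ℝ) ≤ |t| ^ p := Real.rpow_nonneg (abs_nonneg t) p
    have h3 : (0:ℝ) ≤ |t| ^ (p - ε) := Real.rpow_nonneg (abs_nonneg t) _
    have h4 : 0 ≤ (p - 2) * |t| ^ p * a * (Real.sin (2 * (|t| ^ ε / ε)) + 1) :=
      mul_nonneg (mul_nonneg (mul_nonneg (by linarith) h2) ha0.le) (by linarith)
    have h5 : 0 ≤ a * (p - 2) * (p - 2 - ε) * |t| ^ (p - ε) * Real.sin (|t| ^ ε / ε) ^ 2 :=
      mul_nonneg (mul_nonneg (mul_nonneg (mul_nonneg ha0.le (by linarith)) (by linarith)) h3)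
        (sq_nonneg _)
    nlinarith [h4, h5]
end

section
/- Let 2 < p < 4, 0 < ε < p−2, and 0 < a < 1. Define F(t) = |t|^p + a(p−2)|t|^{p−ε} sin²(|t|^ε/ε) with derivative f = F′. Then for every t ∈ ℝ, f(t)·t ≥ 2F(t) ≥ 0. -/
lemma abs_rpow_hasDerivAt' (r : ℝ) {t : ℝ} (ht : t ≠ 0) :
    HasDerivAt (fun x : ℝ => |x| ^ r) (r * |t| ^ r / t) t := by
  rcases ht.lt_or_gt with h | h
  · have h1 : HasDerivAt (fun x : ℝ => (-x) ^ r) (r * (-t) ^ (r - 1) * (-1)) t := by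
      have := (Real.hasDerivAt_rpow_const (p := r) (x := -t)
        (Or.inl (by linarith))).comp t (hasDerivAt_neg t)
      simpa [Function.comp_def] using this
    have heq : (fun x : ℝ => |x| ^ r) =ᶠ[nhds t] fun x : ℝ => (-x) ^ r := by
      filter_upwards [Iio_mem_nhds h] with x hx
      rw [abs_of_neg hx]
    refine (h1.congr_of_eventuallyEq heq).congr_deriv ?_
    rw [abs_of_neg h, Real.rpow_sub_one (by linarith : (-t) ≠ 0)]
    field_simp
  · have h1 : HasDerivAt (fun x : ℝ => x ^ r) (r * t ^ (r - 1)) t :=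
      Real.hasDerivAt_rpow_const (Or.inl h.ne')
    have heq : (fun x : ℝ => |x| ^ r) =ᶠ[nhds t] fun x : ℝ => x ^ r := by
      filter_upwards [Ioi_mem_nhds h] with x hx
      rw [abs_of_pos hx]
    refine (h1.congr_of_eventuallyEq heq).congr_deriv ?_
    rw [abs_of_pos h, Real.rpow_sub_one h.ne']
    field_simp

lemma stmt4_key (p ε a A B s c : ℝ) (hp2 : 2 < p) (hεp : ε < p - 2)
    (ha0 : 0 < a) (ha1 : a < 1) (hA : 0 ≤ A) (hB : 0 ≤ B)
    (hpy : s ^ 2 + c ^ 2 = 1) :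
    2 * (A * B + a * (p - 2) * A * s ^ 2) ≤
      p * (A * B) + a * (p - 2) * ((p - ε) * A * s ^ 2 + 2 * A * B * s * c) := by
  have h1 : (0:ℝ) ≤ 1 + 2 * s * c := by nlinarith [sq_nonneg (s + c)]
  have P1 : (0:ℝ) ≤ a * (p - 2) * (A * B * (1 + 2 * s * c)) :=
    mul_nonneg (mul_nonneg ha0.le (by linarith)) (mul_nonneg (mul_nonneg hA hB) h1)
  have P2 : (0:ℝ) ≤ a * ((p - 2) * ((p - ε - 2) * (A * s ^ 2))) :=
    mul_nonneg ha0.le (mul_nonneg (by linarith)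
      (mul_nonneg (by linarith) (mul_nonneg hA (sq_nonneg s))))
  have P3 : (0:ℝ) ≤ (p - 2) * ((1 - a) * (A * B)) :=
    mul_nonneg (by linarith) (mul_nonneg (by linarith) (mul_nonneg hA hB))
  nlinarith [P1, P2, P3]

/-- For `2 < p < 4`, `0 < ε < p - 2`, `0 < a < 1`, with `F` the model
nonlinearity and `f = F'`: `f(t)·t ≥ 2F(t) ≥ 0` for every `t ∈ ℝ`. -/
theorem stmt_4 (p ε a : ℝ) (hp2 : 2 < p) (hp4 : p < 4) (hε : 0 < ε) (hεp : ε < p - 2)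
    (ha0 : 0 < a) (ha1 : a < 1)
    (F f : ℝ → ℝ)
    (hF : ∀ t : ℝ, F t = |t| ^ p + a * (p - 2) * |t| ^ (p - ε) * Real.sin (|t| ^ ε / ε) ^ 2)
    (hf : f = deriv F) :
    ∀ t : ℝ, 2 * F t ≤ f t * t ∧ 0 ≤ 2 * F t := by
  intro t
  have h1 : (0:ℝ) ≤ |t| ^ p := Real.rpow_nonneg (abs_nonneg t) p
  have h2 : (0:ℝ) ≤ |t| ^ (p - ε) := Real.rpow_nonneg (abs_nonneg t) _
  have h2F : 0 ≤ 2 * F t := by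
    rw [hF t]
    have h3 : (0:ℝ) ≤ a * (p - 2) * |t| ^ (p - ε) * Real.sin (|t| ^ ε / ε) ^ 2 :=
      mul_nonneg (mul_nonneg (mul_nonneg ha0.le (by linarith)) h2) (sq_nonneg _)
    linarith
  refine ⟨?_, h2F⟩
  rcases eq_or_ne t 0 with rfl | ht
  · have : F 0 = 0 := by
      rw [hF 0]
      simp [Real.zero_rpow (by linarith : p ≠ 0), Real.zero_rpow (by linarith : p - ε ≠ 0)]
    simp [this]
  · have hεne : ε ≠ 0 := hε.ne'
    have hu : HasDerivAt (fun x : ℝ => |x| ^ ε / ε) (ε * |t| ^ ε / t / ε) t :=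
      HasDerivAt.div_const (abs_rpow_hasDerivAt' ε ht) ε
    have hsin : HasDerivAt (fun x : ℝ => Real.sin (|x| ^ ε / ε))
        (Real.cos (|t| ^ ε / ε) * (ε * |t| ^ ε / t / ε)) t :=
      (Real.hasDerivAt_sin _).comp t hu
    have hsq := hsin.pow 2
    have h2' := ((abs_rpow_hasDerivAt' (p - ε) ht).mul hsq).const_mul (a * (p - 2))
    have hD := (abs_rpow_hasDerivAt' p ht).add h2'
    have hFeq2 : F = fun x : ℝ =>
        |x| ^ p + a * (p - 2) * (|x| ^ (p - ε) * Real.sin (|x| ^ ε / ε) ^ 2) := by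
      funext x; rw [hF x]; ring
    have hFD : HasDerivAt F
        (p * |t| ^ p / t + a * (p - 2) *
          ((p - ε) * |t| ^ (p - ε) / t * Real.sin (|t| ^ ε / ε) ^ 2 +
            |t| ^ (p - ε) * ((2:ℕ) * Real.sin (|t| ^ ε / ε) ^ (2 - 1) *
              (Real.cos (|t| ^ ε / ε) * (ε * |t| ^ ε / t / ε))))) t := by
      rw [hFeq2]; exact hD
    rw [hf, hFD.deriv, hF t]
    have habs : (0:ℝ) < |t| := abs_pos.mpr ht
    have hAB : |t| ^ p = |t| ^ (p - ε) * |t| ^ ε := by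
      rw [← Real.rpow_add habs]; ring_nf
    have hclear : (p * |t| ^ p / t + a * (p - 2) *
          ((p - ε) * |t| ^ (p - ε) / t * Real.sin (|t| ^ ε / ε) ^ 2 +
            |t| ^ (p - ε) * ((2:ℕ) * Real.sin (|t| ^ ε / ε) ^ (2 - 1) *
              (Real.cos (|t| ^ ε / ε) * (ε * |t| ^ ε / t / ε))))) * t
        = p * (|t| ^ (p - ε) * |t| ^ ε) + a * (p - 2) *
            ((p - ε) * |t| ^ (p - ε) * Real.sin (|t| ^ ε / ε) ^ 2 +
              2 * |t| ^ (p - ε) * |t| ^ ε * Real.sin (|t| ^ ε / ε) * Real.cos (|t| ^ ε / ε)) := by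
      rw [hAB]
      push_cast
      field_simp
    rw [hclear, hAB]
    have := stmt4_key p ε a (|t| ^ (p - ε)) (|t| ^ ε) (Real.sin (|t| ^ ε / ε))
      (Real.cos (|t| ^ ε / ε)) hp2 hεp ha0 ha1 h2 (Real.rpow_nonneg (abs_nonneg t) _)
      (Real.sin_sq_add_cos_sq _)
    linarith
end
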